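/- Let R₀ > 1. Then p = (4 + R₀ − √(R₀(8 + R₀)))/(2R₀) lies in [0,1) and is the unique solution in [0,1) of the equation p (1 + R₀(1 − p)/2)² = 1. -/

import Mathlib

/-- For `R₀ > 1`, `p = (4 + R₀ - √(R₀(8 + R₀)))/(2R₀)` lies in `[0,1)` and is
the unique solution in `[0,1)` of `p(1 + R₀(1 - p)/2)² = 1` (the minor-outbreak
probability for the SIS model with Erlang infectious periods, `k = 2`). -/
theorem sis_erlang2_minor_outbreak_probability (R₀ : ℝ) (hR₀ : 1 < R₀) :
    (0 ≤ (4 + R₀ - Real.sqrt (R₀ * (8 + R₀))) / (2 * R₀) ∧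
      (4 + R₀ - Real.sqrt (R₀ * (8 + R₀))) / (2 * R₀) < 1) ∧
    ∀ p : ℝ, (0 ≤ p ∧ p < 1 ∧ p * (1 + R₀ * (1 - p) / 2) ^ 2 = 1) ↔
      p = (4 + R₀ - Real.sqrt (R₀ * (8 + R₀))) / (2 * R₀) := by
  have hR : (0:ℝ) < R₀ := by linarith
  set s := Real.sqrt (R₀ * (8 + R₀)) with hs
  have hs2 : s ^ 2 = R₀ * (8 + R₀) := Real.sq_sqrt (by nlinarith)
  have hs0 : 0 < s := Real.sqrt_pos.mpr (by nlinarith)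
  have hslt : s < 4 + R₀ := by
    nlinarith [hs2, hs0]
  have hsgt : R₀ - 4 < s := by
    nlinarith [hs2, hs0]
  have hsgt' : 4 - R₀ < s := by
    nlinarith [hs2, hs0]
  have h2R : (0:ℝ) < 2 * R₀ := by linarith
  refine ⟨⟨?_, ?_⟩, ?_⟩
  · apply div_nonneg (by linarith) (by linarith)
  · rw [div_lt_one h2R]; linarith
  · intro p
    constructor
    · rintro ⟨hp0, hp1, heq⟩
      have hfac : (p - 1) * (R₀ ^ 2 * p ^ 2 - (4 * R₀ + R₀ ^ 2) * p + 4) = 0 := by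
        linear_combination 4 * heq
      have hq : R₀ ^ 2 * p ^ 2 - (4 * R₀ + R₀ ^ 2) * p + 4 = 0 := by
        rcases mul_eq_zero.mp hfac with h | h
        · linarith
        · exact h
      have hfac2 : (2 * R₀ * p - (4 + R₀ - s)) * (2 * R₀ * p - (4 + R₀ + s)) = 0 := by
        linear_combination 4 * hq - hs2
      have hne : 2 * R₀ * p - (4 + R₀ + s) ≠ 0 := by
        have : 2 * R₀ * p < 2 * R₀ := by nlinarith
        intro h; nlinarith
      have h1 : 2 * R₀ * p - (4 + R₀ - s) = 0 := by
        rcases mul_eq_zero.mp hfac2 with h | h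
        · exact h
        · exact absurd h hne
      field_simp
      linarith
    · rintro rfl
      refine ⟨div_nonneg (by linarith) (by linarith), by rw [div_lt_one h2R]; linarith, ?_⟩
      have hq : R₀ ^ 2 * ((4 + R₀ - s) / (2 * R₀)) ^ 2 -
          (4 * R₀ + R₀ ^ 2) * ((4 + R₀ - s) / (2 * R₀)) + 4 = 0 := by
        field_simp
        ring_nf
        linear_combination hs2
      linear_combination (((4 + R₀ - s) / (2 * R₀) - 1) / 4) * hq
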